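/- arXiv:1709.02532 — 2 statements merged into one kernel-verified Lean document; each statement's English description precedes it below -/
import Mathlib

section
/- For every integer q ≥ 1 and every x ∈ ℝ^q, the integral ∫_{ℝ^q} (1 − cos⟨t, x⟩) / (K_q |t|^{q+1}) dt equals |x|, where K_q = π^{(q+1)/2} / Γ((q+1)/2), |·| is the Euclidean norm, and ⟨·,·⟩ the Euclidean inner product (the integrand is extended by 0 at t = 0). -/
open MeasureTheory
open scoped RealInnerProductSpace Classical

/-- The constant `K_q = π^{(q+1)/2} / Γ((q+1)/2)`. -/
noncomputable def Kconst (q : ℕ) : ℝ :=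
  Real.pi ^ ((q + 1 : ℝ) / 2) / Real.Gamma ((q + 1 : ℝ) / 2)

open Real Set
open scoped ENNReal

section SzekelyAux

lemma szk_gauss_int (q : ℕ) {u : ℝ} (hu : 0 < u) :
    Integrable (fun t : EuclideanSpace ℝ (Fin q) => Real.exp (-(u * ‖t‖ ^ 2))) := by
  have h := (GaussianFourier.integrable_cexp_neg_mul_sq_norm_add
    (V := EuclideanSpace ℝ (Fin q)) (b := (u : ℂ)) (by simpa using hu) 0 0).norm
  refine h.congr ?_
  filter_upwards with v
  simp [Complex.norm_exp]
  norm_cast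
  exact Or.inl rfl

lemma szk_gauss_val (q : ℕ) {u : ℝ} (hu : 0 < u) :
    ∫ t : EuclideanSpace ℝ (Fin q), Real.exp (-(u * ‖t‖ ^ 2))
      = (π / u) ^ ((q : ℝ) / 2) := by
  have h := GaussianFourier.integral_rexp_neg_mul_sq_norm
    (V := EuclideanSpace ℝ (Fin q)) hu
  simpa [finrank_euclideanSpace_fin, neg_mul] using h

lemma szk_cos_gauss_val (q : ℕ) {u : ℝ} (hu : 0 < u) (x : EuclideanSpace ℝ (Fin q)) :
    ∫ t : EuclideanSpace ℝ (Fin q), Real.cos ⟪t, x⟫ * Real.exp (-(u * ‖t‖ ^ 2))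
      = (π / u) ^ ((q : ℝ) / 2) * Real.exp (-(‖x‖ ^ 2 / (4 * u))) := by
  have hb : 0 < ((u : ℂ)).re := by simpa using hu
  have key := GaussianFourier.integral_cexp_neg_mul_sq_norm_add
    (V := EuclideanSpace ℝ (Fin q)) hb Complex.I x
  have hint := GaussianFourier.integrable_cexp_neg_mul_sq_norm_add
    (V := EuclideanSpace ℝ (Fin q)) hb Complex.I x
  have hre : (∫ v : EuclideanSpace ℝ (Fin q), (Complex.exp (-(u:ℂ) * (‖v‖:ℂ) ^ 2 + Complex.I * ((⟪x, v⟫ : ℝ) : ℂ))).re)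
      = (((π : ℂ) / (u : ℂ)) ^ ((Module.finrank ℝ (EuclideanSpace ℝ (Fin q))) / 2 : ℂ)
      * Complex.exp (Complex.I ^ 2 * (‖x‖ : ℂ) ^ 2 / (4 * (u : ℂ)))).re :=
    (integral_re hint).trans (congrArg Complex.re key)
  have lhs_eq : ∀ v : EuclideanSpace ℝ (Fin q),
      (Complex.exp (-(u:ℂ) * (‖v‖:ℂ) ^ 2 + Complex.I * ((⟪x, v⟫ : ℝ) : ℂ))).re
        = Real.cos ⟪v, x⟫ * Real.exp (-(u * ‖v‖ ^ 2)) := by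
    intro v
    rw [Complex.exp_re]
    have h1 : (-(u:ℂ) * (‖v‖:ℂ) ^ 2 + Complex.I * ((⟪x, v⟫ : ℝ) : ℂ)).re = -(u * ‖v‖ ^ 2) := by
      simp
      left; norm_cast
    have h2 : (-(u:ℂ) * (‖v‖:ℂ) ^ 2 + Complex.I * ((⟪x, v⟫ : ℝ) : ℂ)).im = ⟪x, v⟫ := by
      simp
      right; norm_cast
    rw [h1, h2, real_inner_comm, mul_comm]
  have rhs_eq : (((π : ℂ) / (u : ℂ)) ^ ((Module.finrank ℝ (EuclideanSpace ℝ (Fin q))) / 2 : ℂ)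
      * Complex.exp (Complex.I ^ 2 * (‖x‖ : ℂ) ^ 2 / (4 * (u : ℂ)))).re
      = (π / u) ^ ((q : ℝ) / 2) * Real.exp (-(‖x‖ ^ 2 / (4 * u))) := by
    rw [Complex.I_sq, finrank_euclideanSpace_fin]
    have h3 : ((π : ℂ) / (u : ℂ)) ^ ((q : ℂ) / 2) = (((π / u) ^ ((q : ℝ) / 2) : ℝ) : ℂ) := by
      rw [Complex.ofReal_cpow (by positivity)]
      push_cast
      ring_nf
    have h4 : (-1 : ℂ) * (‖x‖ : ℂ) ^ 2 / (4 * (u : ℂ)) = ((-(‖x‖ ^ 2 / (4 * u)) : ℝ) : ℂ) := by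
      push_cast; ring
    rw [h3, h4, ← Complex.ofReal_exp, ← Complex.ofReal_mul, Complex.ofReal_re]
  rw [rhs_eq] at hre
  rw [← hre]
  exact integral_congr_ae (Filter.Eventually.of_forall fun v => (lhs_eq v).symm)

lemma szk_cos_gauss_integrable (q : ℕ) {u : ℝ} (hu : 0 < u) (x : EuclideanSpace ℝ (Fin q)) :
    Integrable (fun t : EuclideanSpace ℝ (Fin q) =>
      Real.cos ⟪t, x⟫ * Real.exp (-(u * ‖t‖ ^ 2))) := by
  refine (szk_gauss_int q hu).bdd_mul (c := 1) ?_ (Filter.Eventually.of_forall fun t => ?_)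
  · exact (Real.continuous_cos.comp ((continuous_id.inner continuous_const))).aestronglyMeasurable
  · simpa using Real.abs_cos_le_one _

lemma szk_one_sub_cos_gauss_integrable (q : ℕ) {u : ℝ} (hu : 0 < u)
    (x : EuclideanSpace ℝ (Fin q)) :
    Integrable (fun t : EuclideanSpace ℝ (Fin q) =>
      (1 - Real.cos ⟪t, x⟫) * Real.exp (-(u * ‖t‖ ^ 2))) := by
  have h := (szk_gauss_int q hu).sub (szk_cos_gauss_integrable q hu x)
  refine h.congr (Filter.Eventually.of_forall fun t => ?_)
  simp only [Pi.sub_apply]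
  ring

lemma szk_inner_val (q : ℕ) {u : ℝ} (hu : 0 < u) (x : EuclideanSpace ℝ (Fin q)) :
    ∫ t : EuclideanSpace ℝ (Fin q), (1 - Real.cos ⟪t, x⟫) * Real.exp (-(u * ‖t‖ ^ 2))
      = (π / u) ^ ((q : ℝ) / 2) * (1 - Real.exp (-(‖x‖ ^ 2 / (4 * u)))) := by
  have h : ∀ t : EuclideanSpace ℝ (Fin q),
      (1 - Real.cos ⟪t, x⟫) * Real.exp (-(u * ‖t‖ ^ 2))
        = Real.exp (-(u * ‖t‖ ^ 2)) - Real.cos ⟪t, x⟫ * Real.exp (-(u * ‖t‖ ^ 2)) := by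
    intro t; ring
  simp_rw [h]
  rw [integral_sub (szk_gauss_int q hu) (szk_cos_gauss_integrable q hu x),
    szk_gauss_val q hu, szk_cos_gauss_val q hu x]
  ring

lemma szk_gamma_integrable {a s : ℝ} (ha : 0 < a) (hs : 0 < s) :
    IntegrableOn (fun u : ℝ => u ^ (s - 1) * Real.exp (-(a * u))) (Ioi 0) := by
  have h := integrableOn_rpow_mul_exp_neg_mul_rpow (by linarith : (-1:ℝ) < s - 1)
    zero_lt_one ha
  refine h.congr_fun (fun u hu => ?_) measurableSet_Ioi
  dsimp only
  rw [Real.rpow_one, neg_mul]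

lemma szk_gamma_rep {a s : ℝ} (ha : 0 < a) (hs : 0 < s) :
    ∫ u in Ioi 0, u ^ (s - 1) * Real.exp (-(a * u)) = Real.Gamma s / a ^ s := by
  rw [Real.integral_rpow_mul_exp_neg_mul_Ioi hs ha, one_div, Real.inv_rpow ha.le,
    div_eq_inv_mul]

lemma Kconst_pos (q : ℕ) : 0 < Kconst q := by
  have hs : (0:ℝ) < ((q:ℝ) + 1) / 2 := by positivity
  exact div_pos (Real.rpow_pos_of_pos Real.pi_pos _) (Real.Gamma_pos_of_pos hs)

lemma szk_pointwise (q : ℕ) (x t : EuclideanSpace ℝ (Fin q)) :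
    ENNReal.ofReal (if t = 0 then (0:ℝ)
        else (1 - Real.cos ⟪t, x⟫) / (Kconst q * ‖t‖ ^ (q + 1)))
      = ENNReal.ofReal ((Kconst q * Real.Gamma (((q:ℝ) + 1) / 2))⁻¹)
        * ∫⁻ u in Ioi 0, ENNReal.ofReal
            ((1 - Real.cos ⟪t, x⟫) * (u ^ ((((q:ℝ) + 1) / 2) - 1) * Real.exp (-(‖t‖ ^ 2 * u)))) := by
  set s : ℝ := ((q:ℝ) + 1) / 2 with hs_def
  have hs : 0 < s := by positivity
  by_cases ht : t = 0
  · simp [ht]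
  · have hn : 0 < ‖t‖ := norm_pos_iff.mpr ht
    have ha : 0 < ‖t‖ ^ 2 := by positivity
    have hcos : 0 ≤ 1 - Real.cos ⟪t, x⟫ := sub_nonneg.mpr (Real.cos_le_one _)
    simp only [if_neg ht]
    simp_rw [ENNReal.ofReal_mul hcos]
    rw [lintegral_const_mul' _ _ ENNReal.ofReal_ne_top]
    have hnn : 0 ≤ᵐ[volume.restrict (Ioi 0)]
        fun u : ℝ => u ^ (s - 1) * Real.exp (-(‖t‖ ^ 2 * u)) := by
      filter_upwards [ae_restrict_mem measurableSet_Ioi] with u hu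
      exact mul_nonneg (Real.rpow_nonneg (le_of_lt hu) _) (Real.exp_pos _).le
    rw [← ofReal_integral_eq_lintegral_ofReal (szk_gamma_integrable ha hs) hnn,
      szk_gamma_rep ha hs]
    rw [← ENNReal.ofReal_mul hcos,
      ← ENNReal.ofReal_mul
        (inv_nonneg.mpr (mul_nonneg (Kconst_pos q).le (Real.Gamma_pos_of_pos hs).le))]
    congr 1
    have hpow : (‖t‖ ^ 2 : ℝ) ^ s = ‖t‖ ^ (q + 1) := by
      rw [← Real.rpow_natCast ‖t‖ 2, ← Real.rpow_mul hn.le, ← Real.rpow_natCast ‖t‖ (q + 1)]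
      congr 1
      push_cast [hs_def]
      ring
    rw [hpow]
    have hΓ : Real.Gamma s ≠ 0 := (Real.Gamma_pos_of_pos hs).ne'
    have hK : Kconst q ≠ 0 := (Kconst_pos q).ne'
    have hT : (‖t‖ : ℝ) ^ (q + 1) ≠ 0 := by positivity
    field_simp

lemma szk_exp_Ioo {T : ℝ} (hT : 0 < T) :
    ∫⁻ w in Ioo 0 T, ENNReal.ofReal (Real.exp (-w))
      = ENNReal.ofReal (1 - Real.exp (-T)) := by
  have hint : IntegrableOn (fun w : ℝ => Real.exp (-w)) (Ioo 0 T) := by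
    have h := exp_neg_integrableOn_Ioi 0 (zero_lt_one)
    have h2 : IntegrableOn (fun w : ℝ => Real.exp (-w)) (Ioi 0) := by
      refine h.congr_fun (fun w _ => ?_) measurableSet_Ioi
      norm_num
    exact h2.mono_set Ioo_subset_Ioi_self
  rw [← ofReal_integral_eq_lintegral_ofReal hint
    (Filter.Eventually.of_forall fun w => (Real.exp_pos _).le)]
  congr 1
  rw [← integral_Ioc_eq_integral_Ioo, ← intervalIntegral.integral_of_le hT.le]
  have h := intervalIntegral.integral_comp_neg (a := 0) (b := T) (fun x => Real.exp x)
  rw [h, integral_exp]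
  norm_num

lemma szk_rpow_Ioo {T : ℝ} (hT : 0 < T) :
    ∫⁻ u in Ioo 0 T, ENNReal.ofReal (u ^ (-(1/2) : ℝ))
      = ENNReal.ofReal (2 * T ^ ((1:ℝ)/2)) := by
  have hint : IntegrableOn (fun u : ℝ => u ^ (-(1/2) : ℝ)) (Ioo 0 T) := by
    have h := intervalIntegral.intervalIntegrable_rpow' (a := 0) (b := T)
      (by norm_num : (-1:ℝ) < -(1/2))
    rw [intervalIntegrable_iff_integrableOn_Ioo_of_le hT.le] at h
    exact h
  have hnn : 0 ≤ᵐ[volume.restrict (Ioo 0 T)] fun u : ℝ => u ^ (-(1/2) : ℝ) := by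
    filter_upwards [ae_restrict_mem measurableSet_Ioo] with u hu
    exact Real.rpow_nonneg hu.1.le _
  rw [← ofReal_integral_eq_lintegral_ofReal hint hnn]
  congr 1
  rw [← integral_Ioc_eq_integral_Ioo, ← intervalIntegral.integral_of_le hT.le,
    integral_rpow (Or.inl (by norm_num : (-1:ℝ) < -(1/2)))]
  rw [Real.zero_rpow (by norm_num : (-(1/2) : ℝ) + 1 ≠ 0)]
  norm_num
  ring

lemma szk_oneD {b : ℝ} (hb : 0 < b) :
    ∫⁻ u in Ioi 0, ENNReal.ofReal (u ^ (-(1/2) : ℝ) * (1 - Real.exp (-(b / u))))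
      = ENNReal.ofReal (2 * b ^ ((1:ℝ)/2) * Real.Gamma (1/2)) := by
  classical
  set F : ℝ → ℝ → ℝ≥0∞ := fun u w =>
    if u * w < b then ENNReal.ofReal (u ^ (-(1/2) : ℝ) * Real.exp (-w)) else 0 with hF
  have hmeas : AEMeasurable (Function.uncurry F)
      ((volume.restrict (Ioi (0:ℝ))).prod (volume.restrict (Ioi (0:ℝ)))) := by
    apply Measurable.aemeasurable
    apply Measurable.ite
    · exact measurableSet_lt (measurable_fst.mul measurable_snd) measurable_const
    · have h : Measurable fun p : ℝ × ℝ => (p.1 ^ (-(1/2):ℝ)) * Real.exp (-p.2) := by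
        fun_prop
      exact ENNReal.measurable_ofReal.comp h
    · exact measurable_const
  have stepa : ∀ u ∈ Ioi (0:ℝ), (∫⁻ w in Ioi 0, F u w)
      = ENNReal.ofReal (u ^ (-(1/2) : ℝ) * (1 - Real.exp (-(b / u)))) := by
    intro u hu
    have hu' : (0:ℝ) < u := hu
    have hT : 0 < b / u := div_pos hb hu'
    have h1 : ∀ w, F u w = (Iio (b/u)).indicator
        (fun w => ENNReal.ofReal (u ^ (-(1/2) : ℝ) * Real.exp (-w))) w := by
      intro w
      rw [hF]
      simp only [Set.indicator, mem_Iio]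
      congr 1
      simp only [eq_iff_iff]
      rw [mul_comm]
      exact (lt_div_iff₀ hu').symm
    simp_rw [h1]
    rw [lintegral_indicator measurableSet_Iio, Measure.restrict_restrict measurableSet_Iio]
    rw [show Iio (b/u) ∩ Ioi 0 = Ioo 0 (b/u) by rw [inter_comm]; exact Ioi_inter_Iio]
    simp_rw [ENNReal.ofReal_mul (Real.rpow_nonneg hu'.le _)]
    rw [lintegral_const_mul' _ _ ENNReal.ofReal_ne_top, szk_exp_Ioo hT,
      ← ENNReal.ofReal_mul (Real.rpow_nonneg hu'.le _)]
  have stepb : ∀ w ∈ Ioi (0:ℝ), (∫⁻ u in Ioi 0, F u w)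
      = ENNReal.ofReal (2 * b ^ ((1:ℝ)/2) * (Real.exp (-w) * w ^ (-(1/2) : ℝ))) := by
    intro w hw
    have hw' : (0:ℝ) < w := hw
    have hT : 0 < b / w := div_pos hb hw'
    have h1 : ∀ u, F u w = (Iio (b/w)).indicator
        (fun u => ENNReal.ofReal (u ^ (-(1/2) : ℝ) * Real.exp (-w))) u := by
      intro u
      rw [hF]
      simp only [Set.indicator, mem_Iio]
      congr 1
      simp only [eq_iff_iff]
      exact (lt_div_iff₀ hw').symm
    simp_rw [h1]
    rw [lintegral_indicator measurableSet_Iio, Measure.restrict_restrict measurableSet_Iio]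
    rw [show Iio (b/w) ∩ Ioi 0 = Ioo 0 (b/w) by rw [inter_comm]; exact Ioi_inter_Iio]
    have h2 : ∀ u : ℝ, ENNReal.ofReal (u ^ (-(1/2) : ℝ) * Real.exp (-w))
        = ENNReal.ofReal (Real.exp (-w)) * ENNReal.ofReal (u ^ (-(1/2) : ℝ)) := by
      intro u
      rw [← ENNReal.ofReal_mul (Real.exp_pos _).le, mul_comm]
    simp_rw [h2]
    rw [lintegral_const_mul' _ _ ENNReal.ofReal_ne_top, szk_rpow_Ioo hT,
      ← ENNReal.ofReal_mul (Real.exp_pos _).le]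
    congr 1
    rw [Real.div_rpow hb.le hw'.le, Real.rpow_neg hw'.le]
    ring
  calc ∫⁻ u in Ioi 0, ENNReal.ofReal (u ^ (-(1/2) : ℝ) * (1 - Real.exp (-(b / u))))
      = ∫⁻ u in Ioi 0, ∫⁻ w in Ioi 0, F u w := by
        refine (setLIntegral_congr_fun measurableSet_Ioi ?_).symm
        exact stepa
    _ = ∫⁻ w in Ioi 0, ∫⁻ u in Ioi 0, F u w := lintegral_lintegral_swap hmeas
    _ = ∫⁻ w in Ioi 0, ENNReal.ofReal (2 * b ^ ((1:ℝ)/2))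
          * ENNReal.ofReal (Real.exp (-w) * w ^ (-(1/2) : ℝ)) := by
        refine setLIntegral_congr_fun measurableSet_Ioi ?_
        refine fun w hw => ?_
        dsimp only
        rw [stepb w hw, ENNReal.ofReal_mul (by positivity)]
    _ = ENNReal.ofReal (2 * b ^ ((1:ℝ)/2))
          * ∫⁻ w in Ioi 0, ENNReal.ofReal (Real.exp (-w) * w ^ (-(1/2) : ℝ)) := by
        rw [lintegral_const_mul' _ _ ENNReal.ofReal_ne_top]
    _ = ENNReal.ofReal (2 * b ^ ((1:ℝ)/2) * Real.Gamma (1/2)) := by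
        have hint := Real.GammaIntegral_convergent (by norm_num : (0:ℝ) < 1/2)
        have hnn : 0 ≤ᵐ[volume.restrict (Ioi (0:ℝ))]
            fun w : ℝ => Real.exp (-w) * w ^ ((1/2 : ℝ) - 1) := by
          filter_upwards [ae_restrict_mem measurableSet_Ioi] with w hw
          exact mul_nonneg (Real.exp_pos _).le (Real.rpow_nonneg (le_of_lt hw) _)
        have hΓ := Real.Gamma_eq_integral (by norm_num : (0:ℝ) < 1/2)
        have hconv : ∫⁻ w in Ioi (0:ℝ), ENNReal.ofReal (Real.exp (-w) * w ^ (-(1/2):ℝ))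
            = ENNReal.ofReal (Real.Gamma (1/2)) := by
          rw [show ((-(1/2):ℝ)) = (1/2 : ℝ) - 1 by norm_num, hΓ,
            ofReal_integral_eq_lintegral_ofReal hint hnn]
        rw [hconv, ← ENNReal.ofReal_mul (by positivity)]

end SzekelyAux

/-- Lemma 1 of Székely et al.: for every `q ≥ 1` and `x ∈ ℝ^q`,
`∫_{ℝ^q} (1 - cos⟨t, x⟩) / (K_q |t|^{q+1}) dt = |x|`, the integrand being
extended by `0` at `t = 0`. -/
theorem statement0 (q : ℕ) (hq : 1 ≤ q) (x : EuclideanSpace ℝ (Fin q)) :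
    (∫ t : EuclideanSpace ℝ (Fin q),
      if t = 0 then (0 : ℝ)
      else (1 - Real.cos ⟪t, x⟫) / (Kconst q * ‖t‖ ^ (q + 1))) = ‖x‖ := by
  by_cases hx : x = 0
  · simp [hx]
  set s : ℝ := ((q:ℝ) + 1) / 2 with hs_def
  have hs : 0 < s := by positivity
  have hc : 0 < ‖x‖ := norm_pos_iff.mpr hx
  set c : ℝ := ‖x‖ with hc_def
  set b : ℝ := c ^ 2 / 4 with hb_def
  have hb : 0 < b := by positivity
  set f : EuclideanSpace ℝ (Fin q) → ℝ := fun t =>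
    if t = 0 then (0:ℝ) else (1 - Real.cos ⟪t, x⟫) / (Kconst q * ‖t‖ ^ (q + 1)) with hf_def
  have hf_meas : Measurable f := by
    apply Measurable.ite
    · exact measurableSet_eq_fun measurable_id measurable_const
    · exact measurable_const
    · apply Measurable.div
      · exact (continuous_const.sub
          (Real.continuous_cos.comp (continuous_id.inner continuous_const))).measurable
      · exact (continuous_const.mul (continuous_norm.pow _)).measurable
  have hf_nonneg : ∀ t, 0 ≤ f t := by
    intro t
    rw [hf_def]
    dsimp only
    split_ifs with h
    · exact le_refl 0
    · exact div_nonneg (sub_nonneg.mpr (Real.cos_le_one _))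
        (mul_nonneg (Kconst_pos q).le (by positivity))
  rw [integral_eq_lintegral_of_nonneg_ae (Filter.Eventually.of_forall hf_nonneg)
    hf_meas.aestronglyMeasurable]
  suffices h : (∫⁻ t, ENNReal.ofReal (f t)) = ENNReal.ofReal c by
    rw [h, ENNReal.toReal_ofReal hc.le]
  -- subordination
  have key : (∫⁻ t, ENNReal.ofReal (f t))
      = ENNReal.ofReal ((Kconst q * Real.Gamma s)⁻¹)
        * ∫⁻ t, ∫⁻ u in Ioi 0, ENNReal.ofReal
            ((1 - Real.cos ⟪t, x⟫) * (u ^ (s - 1) * Real.exp (-(‖t‖ ^ 2 * u)))) := by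
    rw [← lintegral_const_mul' _ _ ENNReal.ofReal_ne_top]
    refine lintegral_congr fun t => ?_
    exact szk_pointwise q x t
  rw [key]
  have hswap : (∫⁻ t : EuclideanSpace ℝ (Fin q), ∫⁻ u in Ioi 0, ENNReal.ofReal
        ((1 - Real.cos ⟪t, x⟫) * (u ^ (s - 1) * Real.exp (-(‖t‖ ^ 2 * u)))))
      = ∫⁻ u in Ioi 0, ∫⁻ t : EuclideanSpace ℝ (Fin q), ENNReal.ofReal
        ((1 - Real.cos ⟪t, x⟫) * (u ^ (s - 1) * Real.exp (-(‖t‖ ^ 2 * u)))) := by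
    apply lintegral_lintegral_swap
    apply Measurable.aemeasurable
    apply ENNReal.measurable_ofReal.comp
    have m1 : Measurable fun p : EuclideanSpace ℝ (Fin q) × ℝ => 1 - Real.cos ⟪p.1, x⟫ :=
      (continuous_const.sub
        (Real.continuous_cos.comp (continuous_fst.inner continuous_const))).measurable
    have m2 : Measurable fun p : EuclideanSpace ℝ (Fin q) × ℝ => p.2 ^ (s - 1) := by fun_prop
    have m3 : Measurable fun p : EuclideanSpace ℝ (Fin q) × ℝ =>
        Real.exp (-(‖p.1‖ ^ 2 * p.2)) :=
      (Real.continuous_exp.comp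
        ((((continuous_fst.norm).pow 2).mul continuous_snd).neg)).measurable
    exact m1.mul (m2.mul m3)
  rw [hswap]
  have hinner : ∀ u ∈ Ioi (0:ℝ),
      (∫⁻ t : EuclideanSpace ℝ (Fin q), ENNReal.ofReal
        ((1 - Real.cos ⟪t, x⟫) * (u ^ (s - 1) * Real.exp (-(‖t‖ ^ 2 * u)))))
      = ENNReal.ofReal (π ^ ((q:ℝ)/2))
        * ENNReal.ofReal (u ^ (-(1/2) : ℝ) * (1 - Real.exp (-(b / u)))) := by
    intro u hu
    have hu' : (0:ℝ) < u := hu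
    have h1 : ∀ t : EuclideanSpace ℝ (Fin q),
        ENNReal.ofReal ((1 - Real.cos ⟪t, x⟫) * (u ^ (s - 1) * Real.exp (-(‖t‖ ^ 2 * u))))
          = ENNReal.ofReal (u ^ (s - 1))
            * ENNReal.ofReal ((1 - Real.cos ⟪t, x⟫) * Real.exp (-(u * ‖t‖ ^ 2))) := by
      intro t
      rw [← ENNReal.ofReal_mul (Real.rpow_nonneg hu'.le _)]
      congr 1
      rw [mul_comm (‖t‖ ^ 2) u]
      ring
    simp_rw [h1]
    rw [lintegral_const_mul' _ _ ENNReal.ofReal_ne_top]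
    have hnn : 0 ≤ᵐ[(volume : Measure (EuclideanSpace ℝ (Fin q)))]
        fun t => (1 - Real.cos ⟪t, x⟫) * Real.exp (-(u * ‖t‖ ^ 2)) :=
      Filter.Eventually.of_forall fun t =>
        mul_nonneg (sub_nonneg.mpr (Real.cos_le_one _)) (Real.exp_pos _).le
    rw [← ofReal_integral_eq_lintegral_ofReal (szk_one_sub_cos_gauss_integrable q hu' x) hnn,
      szk_inner_val q hu' x,
      ← ENNReal.ofReal_mul (Real.rpow_nonneg hu'.le _)]
    rw [← ENNReal.ofReal_mul (by positivity)]
    congr 1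
    have hπu : (π / u) ^ ((q:ℝ)/2) = π ^ ((q:ℝ)/2) * u ^ (-((q:ℝ)/2)) := by
      rw [Real.div_rpow Real.pi_pos.le hu'.le, Real.rpow_neg hu'.le, div_eq_mul_inv]
    have hus : u ^ (s - 1) * u ^ (-((q:ℝ)/2)) = u ^ (-(1/2) : ℝ) := by
      rw [← Real.rpow_add hu']
      congr 1
      rw [hs_def]; ring
    have hbu : ‖x‖ ^ 2 / (4 * u) = b / u := by
      rw [hb_def, hc_def]; field_simp
    rw [hbu, hπu]
    calc u ^ (s - 1) * (π ^ ((q:ℝ)/2) * u ^ (-((q:ℝ)/2)) * (1 - Real.exp (-(b / u))))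
        = π ^ ((q:ℝ)/2) * ((u ^ (s - 1) * u ^ (-((q:ℝ)/2))) * (1 - Real.exp (-(b / u)))) := by
          ring
      _ = π ^ ((q:ℝ)/2) * (u ^ (-(1/2) : ℝ) * (1 - Real.exp (-(b / u)))) := by rw [hus]
  rw [setLIntegral_congr_fun measurableSet_Ioi hinner,
    lintegral_const_mul' _ _ ENNReal.ofReal_ne_top, szk_oneD hb]
  -- final arithmetic
  rw [← ENNReal.ofReal_mul (by positivity), ← ENNReal.ofReal_mul
    (inv_nonneg.mpr (mul_nonneg (Kconst_pos q).le (Real.Gamma_pos_of_pos hs).le))]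
  congr 1
  have hb12 : b ^ ((1:ℝ)/2) = c / 2 := by
    rw [hb_def, show c ^ 2 / 4 = (c/2)^2 by ring, ← Real.sqrt_eq_rpow]
    exact Real.sqrt_sq (by positivity)
  have hΓhalf : Real.Gamma (1/2) = π ^ ((1:ℝ)/2) := by
    rw [Real.Gamma_one_half_eq, Real.sqrt_eq_rpow]
  have hKG : Kconst q * Real.Gamma s = π ^ s := by
    rw [Kconst, hs_def]
    rw [div_mul_cancel₀]
    exact (Real.Gamma_pos_of_pos (by positivity)).ne'
  have hππ : π ^ ((q:ℝ)/2) * π ^ ((1:ℝ)/2) = π ^ s := by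
    rw [← Real.rpow_add Real.pi_pos]
    congr 1
    rw [hs_def]; ring
  rw [hb12, hΓhalf, hKG]
  have hπs : (0:ℝ) < π ^ s := Real.rpow_pos_of_pos Real.pi_pos _
  field_simp
  nlinarith [hππ, hπs]
end

section
/- Let X_1, X_2, X_3, X_4 be mutually independent random vectors (X_j in ℝ^{p_j}) and let (X^k)_{k=1}^n = ((X_1^k, X_2^k, X_3^k, X_4^k))_{k=1}^n be an i.i.d. sample of (X_1, X_2, X_3, X_4). Define A(t_1, t_2) = φ^n_{(X_1,X_2)}(t_1, t_2) − φ^n_{X_1}(t_1) φ^n_{X_2}(t_2) and B(s_1, s_2) = φ^n_{(X_1,X_2,X_3,X_4)}(s_1, s_2) − φ^n_{(X_1,X_2,X_3)}(s_1) φ^n_{X_4}(s_2), where s_1 is the frequency argument of (X_1, X_2, X_3) and s_2 that of X_4. Then for all t_1, t_2, s_1, s_2: E[A(t_1, t_2)] = 0, E[B(s_1, s_2)] = 0, and E[A(t_1, t_2) · conj(B(s_1, s_2))] = 0; in particular A and B are uncorrelated. -/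
open MeasureTheory ProbabilityTheory Complex Filter
open scoped RealInnerProductSpace

set_option maxHeartbeats 1000000
set_option synthInstance.maxHeartbeats 1000000

noncomputable section

/-- The empirical characteristic function evaluated along a sample: given real phases
`g k ω` for the `k`-th observation, `empCF n g ω = (1/n) ∑ₖ exp(i · g k ω)`. -/
def empCF {Ω : Type*} (n : ℕ) (g : Fin n → Ω → ℝ) (ω : Ω) : ℂ :=
  (n : ℂ)⁻¹ * ∑ k, Complex.exp ((g k ω : ℂ) * Complex.I)

section Aux

variable {Ω : Type*} [MeasurableSpace Ω] {μ : Measure Ω}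

lemma aux_bdd_integrable [IsProbabilityMeasure μ] {f : Ω → ℂ} (hf : Measurable f)
    {C : ℝ} (hb : ∀ ω, ‖f ω‖ ≤ C) : Integrable f μ :=
  (integrable_const C).mono' hf.aestronglyMeasurable (Filter.Eventually.of_forall hb)

lemma aux_indep_integral_mul (F G : Ω → ℂ) (h : IndepFun F G μ)
    (hF : Integrable F μ) (hG : Integrable G μ) :
    ∫ ω, F ω * G ω ∂μ = (∫ ω, F ω ∂μ) * ∫ ω, G ω ∂μ := by
  have hFr : Integrable (fun ω => (F ω).re) μ := hF.re
  have hFi : Integrable (fun ω => (F ω).im) μ := hF.im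
  have hGr : Integrable (fun ω => (G ω).re) μ := hG.re
  have hGi : Integrable (fun ω => (G ω).im) μ := hG.im
  have hrr : IndepFun (fun ω => (F ω).re) (fun ω => (G ω).re) μ :=
    h.comp Complex.measurable_re Complex.measurable_re
  have hri : IndepFun (fun ω => (F ω).re) (fun ω => (G ω).im) μ :=
    h.comp Complex.measurable_re Complex.measurable_im
  have hir : IndepFun (fun ω => (F ω).im) (fun ω => (G ω).re) μ :=
    h.comp Complex.measurable_im Complex.measurable_re
  have hii : IndepFun (fun ω => (F ω).im) (fun ω => (G ω).im) μ :=
    h.comp Complex.measurable_im Complex.measurable_im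
  have irr := hrr.integral_mul_eq_mul_integral hFr.aestronglyMeasurable hGr.aestronglyMeasurable
  have iri := hri.integral_mul_eq_mul_integral hFr.aestronglyMeasurable hGi.aestronglyMeasurable
  have iir := hir.integral_mul_eq_mul_integral hFi.aestronglyMeasurable hGr.aestronglyMeasurable
  have iii := hii.integral_mul_eq_mul_integral hFi.aestronglyMeasurable hGi.aestronglyMeasurable
  simp only [Pi.mul_def] at irr iri iir iii
  have Irr : Integrable (fun ω => (F ω).re * (G ω).re) μ := hrr.integrable_mul hFr hGr
  have Iri : Integrable (fun ω => (F ω).re * (G ω).im) μ := hri.integrable_mul hFr hGi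
  have Iir : Integrable (fun ω => (F ω).im * (G ω).re) μ := hir.integrable_mul hFi hGr
  have Iii : Integrable (fun ω => (F ω).im * (G ω).im) μ := hii.integrable_mul hFi hGi
  have hFG : Integrable (fun ω => F ω * G ω) μ := by
    have hrw : (fun ω => F ω * G ω) = fun ω =>
        (((F ω).re * (G ω).re - (F ω).im * (G ω).im : ℝ) : ℂ) +
        (((F ω).re * (G ω).im + (F ω).im * (G ω).re : ℝ) : ℂ) * Complex.I := by
      funext ω
      simp [Complex.ext_iff, Complex.mul_re, Complex.mul_im]
    rw [hrw]
    exact ((Irr.sub Iii).ofReal.add (((Iri.add Iir).ofReal).mul_const Complex.I))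
  apply Complex.ext
  · rw [← RCLike.re_eq_complex_re, ← integral_re hFG]
    simp only [RCLike.re_eq_complex_re, Complex.mul_re]
    rw [integral_sub Irr Iii, irr, iii]
    rw [← RCLike.re_eq_complex_re, ← integral_re hF, ← integral_re hG,
      ← RCLike.im_eq_complex_im, ← integral_im hF, ← integral_im hG]
  · rw [← RCLike.im_eq_complex_im, ← integral_im hFG]
    simp only [RCLike.im_eq_complex_im, Complex.mul_im]
    rw [integral_add Iri Iir, iri, iir]
    rw [← RCLike.re_eq_complex_re, ← integral_re hF, ← integral_re hG,
      ← RCLike.im_eq_complex_im, ← integral_im hF, ← integral_im hG]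

lemma aux_key [IsProbabilityMeasure μ] {n : ℕ} (hn : 0 < n)
    (W : Ω → ℂ) (u v : Fin n → Ω → ℂ) (z : ℂ) {C : ℝ}
    (hWm : Measurable W) (hum : ∀ m, Measurable (u m)) (hvm : ∀ r, Measurable (v r))
    (hWb : ∀ ω, ‖W ω‖ ≤ C) (hub : ∀ m ω, ‖u m ω‖ ≤ 1) (hvb : ∀ r ω, ‖v r ω‖ ≤ 1)
    (hz : ∀ r, ∫ ω, v r ω ∂μ = z)
    (hind : ∀ m r, IndepFun (fun ω => W ω * u m ω) (v r) μ) :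
    ∫ ω, W ω * ((n : ℂ)⁻¹ * ∑ m, u m ω * v m ω -
      ((n : ℂ)⁻¹ * ∑ m, u m ω) * ((n : ℂ)⁻¹ * ∑ r, v r ω)) ∂μ = 0 := by
  have hWub : ∀ m ω, ‖W ω * u m ω‖ ≤ C := fun m ω => by
    rw [norm_mul]
    have h1 : ‖W ω‖ * ‖u m ω‖ ≤ C * 1 :=
      mul_le_mul (hWb ω) (hub m ω) (norm_nonneg _) ((norm_nonneg (W ω)).trans (hWb ω))
    simpa using h1
  have hWu_int : ∀ m, Integrable (fun ω => W ω * u m ω) μ :=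
    fun m => aux_bdd_integrable (hWm.mul (hum m)) (hWub m)
  have hv_int : ∀ r, Integrable (v r) μ := fun r => aux_bdd_integrable (hvm r) (hvb r)
  have hWuv_int : ∀ m r, Integrable (fun ω => W ω * u m ω * v r ω) μ := fun m r =>
    aux_bdd_integrable ((hWm.mul (hum m)).mul (hvm r)) (fun ω => by
      rw [norm_mul]
      have h1 : ‖W ω * u m ω‖ * ‖v r ω‖ ≤ C * 1 :=
        mul_le_mul (hWub m ω) (hvb r ω) (norm_nonneg _) ((norm_nonneg _).trans (hWub m ω))
      simpa using h1)
  have hprod : ∀ m r, ∫ ω, W ω * u m ω * v r ω ∂μ = (∫ ω, W ω * u m ω ∂μ) * z := by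
    intro m r
    rw [← hz r]
    exact aux_indep_integral_mul _ _ (hind m r) (hWu_int m) (hv_int r)
  have hpt : (fun ω => W ω * ((n : ℂ)⁻¹ * ∑ m, u m ω * v m ω -
      ((n : ℂ)⁻¹ * ∑ m, u m ω) * ((n : ℂ)⁻¹ * ∑ r, v r ω))) =
      fun ω => (n : ℂ)⁻¹ * ∑ m, W ω * u m ω * v m ω -
        (n : ℂ)⁻¹ * ∑ m, (n : ℂ)⁻¹ * ∑ r, W ω * u m ω * v r ω := by
    funext ω
    simp only [mul_sub, Finset.mul_sum, Finset.sum_mul]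
    congr 1
    · exact Finset.sum_congr rfl fun m _ => by ring
    · rw [Finset.sum_comm]
      exact Finset.sum_congr rfl fun m _ => Finset.sum_congr rfl fun r _ => by ring
  rw [hpt]
  have hT1int : Integrable (fun ω => ∑ m, W ω * u m ω * v m ω) μ :=
    integrable_finset_sum _ fun m _ => hWuv_int m m
  have hT2int : Integrable
      (fun ω => ∑ m : Fin n, (n : ℂ)⁻¹ * ∑ r, W ω * u m ω * v r ω) μ :=
    integrable_finset_sum _ fun m _ =>
      ((integrable_finset_sum _ fun r _ => hWuv_int m r).const_mul _)
  rw [integral_sub (hT1int.const_mul _) (hT2int.const_mul _),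
    integral_const_mul, integral_const_mul,
    integral_finset_sum _ fun m _ => hWuv_int m m,
    integral_finset_sum _ fun m _ =>
      ((integrable_finset_sum _ fun r _ => hWuv_int m r).const_mul _)]
  have hne : (n : ℂ) ≠ 0 := Nat.cast_ne_zero.2 hn.ne'
  have hinner : ∀ m : Fin n, ∫ ω, (n : ℂ)⁻¹ * ∑ r, W ω * u m ω * v r ω ∂μ =
      (∫ ω, W ω * u m ω ∂μ) * z := by
    intro m
    rw [integral_const_mul, integral_finset_sum _ fun r _ => hWuv_int m r]
    simp only [hprod m]
    rw [Finset.sum_const, Finset.card_univ, Fintype.card_fin, nsmul_eq_mul,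
      ← mul_assoc, inv_mul_cancel₀ hne, one_mul]
  simp only [hinner, hprod]
  exact sub_self _

lemma aux_double_indep {ι κ : Type*} [Fintype ι] {β : κ → Type*}
    [∀ i, MeasurableSpace (β i)]
    (X : ∀ i, Ω → β i) (hXindep : iIndepFun X μ)
    (Y : ι → Ω → ∀ i, β i)
    (hYindep : iIndepFun Y μ)
    (hYid : ∀ k, IdentDistrib (Y k) (fun ω i => X i ω) μ μ) :
    iIndepFun (fun (q : ι × κ) ω => Y q.1 ω q.2) μ := by
  rw [iIndepFun_iff_measure_inter_preimage_eq_mul]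
  intro S sets H
  classical
  have hFS : ∀ k : ι, ∀ q ∈ S.filter fun q : ι × κ => q.1 = k, q ∈ S :=
    fun k q hq => (Finset.mem_filter.1 hq).1
  have hFfst : ∀ k : ι, ∀ q ∈ S.filter fun q : ι × κ => q.1 = k, q.1 = k :=
    fun k q hq => (Finset.mem_filter.1 hq).2
  set D : ι → Set (∀ i, β i) :=
    fun k => ⋂ q ∈ S.filter fun q : ι × κ => q.1 = k, (fun w => w q.2) ⁻¹' sets q with hD
  have hDmeas : ∀ k, MeasurableSet (D k) := by
    intro k
    refine MeasurableSet.biInter (Finset.countable_toSet _) fun q hq => ?_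
    exact measurable_pi_apply q.2 (H q (hFS k q hq))
  have h1 : (⋂ q ∈ S, (fun ω => Y q.1 ω q.2) ⁻¹' sets q) =
      ⋂ k ∈ (Finset.univ : Finset ι), Y k ⁻¹' D k := by
    ext ω
    simp only [Set.mem_iInter, Set.mem_preimage, hD, Finset.mem_filter,
      Finset.mem_univ, true_implies]
    constructor
    · rintro h k ⟨q1, q2⟩ ⟨hq, rfl⟩
      exact h (q1, q2) hq
    · intro h q hq
      exact h q.1 q ⟨hq, rfl⟩
  rw [h1, hYindep.measure_inter_preimage_eq_mul Finset.univ fun k _ => hDmeas k]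
  have h2 : ∀ k, μ (Y k ⁻¹' D k) =
      ∏ q ∈ S.filter (fun q : ι × κ => q.1 = k), μ ((fun ω => Y q.1 ω q.2) ⁻¹' sets q) := by
    intro k
    rw [(hYid k).measure_mem_eq (hDmeas k)]
    have h3 : (fun ω i => X i ω) ⁻¹' D k =
        ⋂ i ∈ (S.filter fun q : ι × κ => q.1 = k).image Prod.snd, X i ⁻¹' sets (k, i) := by
      ext ω
      simp only [hD, Set.mem_preimage, Set.mem_iInter, Finset.mem_image]
      constructor
      · rintro h i ⟨⟨q1, q2⟩, hq, rfl⟩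
        have hq1 := hFfst k _ hq
        simp only at hq1
        subst hq1
        exact h (q1, q2) hq
      · rintro h ⟨q1, q2⟩ hq
        have hq1 := hFfst k _ hq
        simp only at hq1
        subst hq1
        exact h q2 ⟨(q1, q2), hq, rfl⟩
    rw [h3, hXindep.measure_inter_preimage_eq_mul _ ?hm]
    case hm =>
      rintro i hi
      rw [Finset.mem_image] at hi
      obtain ⟨⟨q1, q2⟩, hq, rfl⟩ := hi
      have hq1 := hFfst k _ hq
      simp only at hq1
      subst hq1
      exact H _ (hFS q1 _ hq)
    rw [Finset.prod_image ?hinj]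
    case hinj =>
      rintro ⟨q1, q2⟩ hq ⟨q1', q2'⟩ hq' h
      simp only at h
      subst h
      have e1 := hFfst k _ hq
      have e2 := hFfst k _ hq'
      simp only at e1 e2
      subst e1; subst e2
      rfl
    refine Finset.prod_congr rfl ?_
    rintro ⟨q1, q2⟩ hq
    have hq1 := hFfst k _ hq
    simp only at hq1
    subst hq1
    have hid : IdentDistrib (fun ω => Y q1 ω q2) (X q2) μ μ :=
      (hYid q1).comp (measurable_pi_apply q2)
    exact (hid.measure_mem_eq (H _ (hFS q1 _ hq))).symm
  simp only [h2]
  exact Finset.prod_fiberwise_of_maps_to (fun q _ => Finset.mem_univ q.1) _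

lemma aux_norm_eexp (x : ℝ) : ‖Complex.exp ((x : ℂ) * Complex.I)‖ = 1 := by
  rw [Complex.norm_exp_ofReal_mul_I]

lemma aux_measurable_eexp : Measurable fun x : ℝ => Complex.exp ((x : ℂ) * Complex.I) :=
  Complex.measurable_exp.comp (Complex.measurable_ofReal.mul_const Complex.I)

lemma aux_norm_empCF_le {n : ℕ} (hn : 0 < n) (g : Fin n → Ω → ℝ) (ω : Ω) :
    ‖empCF n g ω‖ ≤ 1 := by
  have h1 : ‖∑ k, Complex.exp ((g k ω : ℂ) * Complex.I)‖ ≤ (n : ℝ) := by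
    refine (norm_sum_le _ _).trans ?_
    have : ∀ k : Fin n, ‖Complex.exp ((g k ω : ℂ) * Complex.I)‖ = 1 :=
      fun k => aux_norm_eexp _
    simp [this]
  have hne : (0 : ℝ) < (n : ℝ) := by exact_mod_cast hn
  calc ‖empCF n g ω‖ = ‖((n : ℂ))⁻¹‖ * ‖∑ k, Complex.exp ((g k ω : ℂ) * Complex.I)‖ := by
        rw [empCF, norm_mul]
    _ ≤ (n : ℝ)⁻¹ * (n : ℝ) := by
        refine mul_le_mul ?_ h1 (norm_nonneg _) (by positivity)
        simp
    _ = 1 := inv_mul_cancel₀ hne.ne'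

lemma aux_measurable_empCF {n : ℕ} (g : Fin n → Ω → ℝ) (hg : ∀ k, Measurable (g k)) :
    Measurable (empCF n g) :=
  measurable_const.mul (Finset.measurable_sum _ fun k _ => aux_measurable_eexp.comp (hg k))

end Aux

/-- Let `X_1, X_2, X_3, X_4` be mutually independent random vectors and let
`(Y^k)_{k=1}^n` be an i.i.d. sample of `(X_1, X_2, X_3, X_4)`. With
`A(t₁,t₂) = φⁿ_{(X₁,X₂)}(t₁,t₂) − φⁿ_{X₁}(t₁) φⁿ_{X₂}(t₂)` and
`B(s₁,s₂) = φⁿ_{(X₁,X₂,X₃,X₄)}(s₁,s₂) − φⁿ_{(X₁,X₂,X₃)}(s₁) φⁿ_{X₄}(s₂)`,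
we have `E[A] = 0`, `E[B] = 0`, and `E[A · conj B] = 0`; in particular `A` and `B`
are uncorrelated. -/
theorem statement18 {Ω : Type*} [MeasurableSpace Ω] (μ : Measure Ω) [IsProbabilityMeasure μ]
    (p : Fin 4 → ℕ) (X : ∀ i : Fin 4, Ω → EuclideanSpace ℝ (Fin (p i)))
    (hmX : ∀ i, Measurable (X i))
    (hXindep : iIndepFun X μ)
    (n : ℕ) (hn : 0 < n)
    (Y : Fin n → Ω → (∀ i : Fin 4, EuclideanSpace ℝ (Fin (p i))))
    (hmY : ∀ k, Measurable (Y k))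
    (hYindep : iIndepFun Y μ)
    (hYid : ∀ k, IdentDistrib (Y k) (fun ω i => X i ω) μ μ)
    (t1 : EuclideanSpace ℝ (Fin (p 0))) (t2 : EuclideanSpace ℝ (Fin (p 1)))
    (s1 : EuclideanSpace ℝ (Fin (p 0)) × EuclideanSpace ℝ (Fin (p 1)) ×
      EuclideanSpace ℝ (Fin (p 2)))
    (s2 : EuclideanSpace ℝ (Fin (p 3))) :
    (∫ ω, (empCF n (fun k ω => (⟪t1, Y k ω 0⟫ : ℝ) + (⟪t2, Y k ω 1⟫ : ℝ)) ω -
        empCF n (fun k ω => (⟪t1, Y k ω 0⟫ : ℝ)) ω *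
          empCF n (fun k ω => (⟪t2, Y k ω 1⟫ : ℝ)) ω) ∂μ) = 0 ∧
    (∫ ω, (empCF n (fun k ω => (⟪s1.1, Y k ω 0⟫ : ℝ) + (⟪s1.2.1, Y k ω 1⟫ : ℝ) +
          (⟪s1.2.2, Y k ω 2⟫ : ℝ) + (⟪s2, Y k ω 3⟫ : ℝ)) ω -
        empCF n (fun k ω => (⟪s1.1, Y k ω 0⟫ : ℝ) + (⟪s1.2.1, Y k ω 1⟫ : ℝ) +
            (⟪s1.2.2, Y k ω 2⟫ : ℝ)) ω *
          empCF n (fun k ω => (⟪s2, Y k ω 3⟫ : ℝ)) ω) ∂μ) = 0 ∧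
    (∫ ω, ((empCF n (fun k ω => (⟪t1, Y k ω 0⟫ : ℝ) + (⟪t2, Y k ω 1⟫ : ℝ)) ω -
        empCF n (fun k ω => (⟪t1, Y k ω 0⟫ : ℝ)) ω *
          empCF n (fun k ω => (⟪t2, Y k ω 1⟫ : ℝ)) ω) *
      (starRingEnd ℂ)
        (empCF n (fun k ω => (⟪s1.1, Y k ω 0⟫ : ℝ) + (⟪s1.2.1, Y k ω 1⟫ : ℝ) +
            (⟪s1.2.2, Y k ω 2⟫ : ℝ) + (⟪s2, Y k ω 3⟫ : ℝ)) ω -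
          empCF n (fun k ω => (⟪s1.1, Y k ω 0⟫ : ℝ) + (⟪s1.2.1, Y k ω 1⟫ : ℝ) +
              (⟪s1.2.2, Y k ω 2⟫ : ℝ)) ω *
            empCF n (fun k ω => (⟪s2, Y k ω 3⟫ : ℝ)) ω)) ∂μ) = 0 := by
  classical
  have hZ : iIndepFun
      (fun q : Fin n × Fin 4 => fun ω => Y q.1 ω q.2) μ :=
    aux_double_indep X hXindep Y hYindep hYid
  have hZm : ∀ q : Fin n × Fin 4, Measurable fun ω => Y q.1 ω q.2 :=
    fun q => (measurable_pi_apply q.2).comp (hmY q.1)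
  have hph : ∀ (i : Fin 4) (t : EuclideanSpace ℝ (Fin (p i))) (k : Fin n),
      Measurable fun ω => (⟪t, Y k ω i⟫ : ℝ) :=
    fun i t k => measurable_const.inner ((measurable_pi_apply i).comp (hmY k))
  have hcm : Measurable fun z : ℂ => (starRingEnd ℂ) z := RCLike.continuous_conj.measurable
  have hev : ∀ (S : Finset (Fin n × Fin 4)) (q : Fin n × Fin 4) (hq : q ∈ S),
      Measurable fun w : ∀ j : S, EuclideanSpace ℝ (Fin (p (j : Fin n × Fin 4).2)) =>
        w ⟨q, hq⟩ := fun S q hq => measurable_pi_apply (⟨q, hq⟩ : S)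
  refine ⟨?_, ?_, ?_⟩
  -- PART 1
  · have hind : ∀ m r : Fin n, IndepFun
        (fun ω => (1 : ℂ) * Complex.exp (((⟪t1, Y m ω 0⟫ : ℝ) : ℂ) * Complex.I))
        (fun ω => Complex.exp (((⟪t2, Y r ω 1⟫ : ℝ) : ℂ) * Complex.I)) μ := by
      intro m r
      have hne : ((m, (0 : Fin 4)) : Fin n × Fin 4) ≠ (r, 1) := fun h =>
        (by decide : ¬((0 : Fin 4) = 1)) (congrArg Prod.snd h)
      have h := (hZ.indepFun hne).comp
        (aux_measurable_eexp.comp (measurable_const.inner measurable_id)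
          : Measurable fun x : EuclideanSpace ℝ (Fin (p 0)) =>
            Complex.exp (((⟪t1, x⟫ : ℝ) : ℂ) * Complex.I))
        (aux_measurable_eexp.comp (measurable_const.inner measurable_id)
          : Measurable fun x : EuclideanSpace ℝ (Fin (p 1)) =>
            Complex.exp (((⟪t2, x⟫ : ℝ) : ℂ) * Complex.I))
      simpa only [one_mul, Function.comp_def] using h
    have hz : ∀ r : Fin n, ∫ ω, Complex.exp (((⟪t2, Y r ω 1⟫ : ℝ) : ℂ) * Complex.I) ∂μ =
        ∫ ω, Complex.exp (((⟪t2, X 1 ω⟫ : ℝ) : ℂ) * Complex.I) ∂μ := by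
      intro r
      exact ((hYid r).comp (aux_measurable_eexp.comp
        (measurable_const.inner (measurable_pi_apply 1)))).integral_eq
    have hk := aux_key (μ := μ) (C := 1) hn (fun _ => (1 : ℂ))
      (fun m ω => Complex.exp (((⟪t1, Y m ω 0⟫ : ℝ) : ℂ) * Complex.I))
      (fun r ω => Complex.exp (((⟪t2, Y r ω 1⟫ : ℝ) : ℂ) * Complex.I))
      (∫ ω, Complex.exp (((⟪t2, X 1 ω⟫ : ℝ) : ℂ) * Complex.I) ∂μ)
      measurable_const
      (fun m => aux_measurable_eexp.comp (hph 0 t1 m))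
      (fun r => aux_measurable_eexp.comp (hph 1 t2 r))
      (fun ω => norm_one.le)
      (fun m ω => (aux_norm_eexp _).le)
      (fun r ω => (aux_norm_eexp _).le)
      hz hind
    rw [← hk]
    refine integral_congr_ae (Filter.Eventually.of_forall fun ω => ?_)
    simp only [empCF, Complex.ofReal_add, add_mul, Complex.exp_add, one_mul]
  -- PART 2
  · have hind : ∀ m r : Fin n, IndepFun
        (fun ω => (1 : ℂ) * Complex.exp (((⟪s1.1, Y m ω 0⟫ + ⟪s1.2.1, Y m ω 1⟫ +
            ⟪s1.2.2, Y m ω 2⟫ : ℝ) : ℂ) * Complex.I))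
        (fun ω => Complex.exp (((⟪s2, Y r ω 3⟫ : ℝ) : ℂ) * Complex.I)) μ := by
      intro m r
      have hm0 : ((m, (0 : Fin 4)) : Fin n × Fin 4) ∈
          ({(m, 0), (m, 1), (m, 2)} : Finset (Fin n × Fin 4)) := by simp
      have hm1 : ((m, (1 : Fin 4)) : Fin n × Fin 4) ∈
          ({(m, 0), (m, 1), (m, 2)} : Finset (Fin n × Fin 4)) := by simp
      have hm2 : ((m, (2 : Fin 4)) : Fin n × Fin 4) ∈
          ({(m, 0), (m, 1), (m, 2)} : Finset (Fin n × Fin 4)) := by simp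
      have hr3 : ((r, (3 : Fin 4)) : Fin n × Fin 4) ∈
          ({(r, 3)} : Finset (Fin n × Fin 4)) := by simp
      have hdisj : Disjoint ({(m, 0), (m, 1), (m, 2)} : Finset (Fin n × Fin 4)) {(r, 3)} := by
        rw [Finset.disjoint_singleton_right]
        simp [Prod.ext_iff]
      have hphi : Measurable fun w : ∀ q : ({(m, 0), (m, 1), (m, 2)} : Finset (Fin n × Fin 4)),
            EuclideanSpace ℝ (Fin (p (q : Fin n × Fin 4).2)) =>
          Complex.exp (((⟪s1.1, w ⟨(m, 0), hm0⟩⟫ + ⟪s1.2.1, w ⟨(m, 1), hm1⟩⟫ +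
            ⟪s1.2.2, w ⟨(m, 2), hm2⟩⟫ : ℝ) : ℂ) * Complex.I) :=
        aux_measurable_eexp.comp
          (((measurable_const.inner (hev _ _ hm0)).add
            (measurable_const.inner (hev _ _ hm1))).add
            (measurable_const.inner (hev _ _ hm2)))
      have hpsi : Measurable fun w : ∀ q : ({(r, 3)} : Finset (Fin n × Fin 4)),
            EuclideanSpace ℝ (Fin (p (q : Fin n × Fin 4).2)) =>
          Complex.exp (((⟪s2, w ⟨(r, 3), hr3⟩⟫ : ℝ) : ℂ) * Complex.I) :=
        aux_measurable_eexp.comp (measurable_const.inner (hev _ _ hr3))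
      have h := (hZ.indepFun_finset _ _ hdisj hZm).comp hphi hpsi
      simpa only [one_mul, Function.comp_def] using h
    have hz : ∀ r : Fin n, ∫ ω, Complex.exp (((⟪s2, Y r ω 3⟫ : ℝ) : ℂ) * Complex.I) ∂μ =
        ∫ ω, Complex.exp (((⟪s2, X 3 ω⟫ : ℝ) : ℂ) * Complex.I) ∂μ := by
      intro r
      exact ((hYid r).comp (aux_measurable_eexp.comp
        (measurable_const.inner (measurable_pi_apply 3)))).integral_eq
    have hk := aux_key (μ := μ) (C := 1) hn (fun _ => (1 : ℂ))
      (fun m ω => Complex.exp (((⟪s1.1, Y m ω 0⟫ + ⟪s1.2.1, Y m ω 1⟫ +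
        ⟪s1.2.2, Y m ω 2⟫ : ℝ) : ℂ) * Complex.I))
      (fun r ω => Complex.exp (((⟪s2, Y r ω 3⟫ : ℝ) : ℂ) * Complex.I))
      (∫ ω, Complex.exp (((⟪s2, X 3 ω⟫ : ℝ) : ℂ) * Complex.I) ∂μ)
      measurable_const
      (fun m => aux_measurable_eexp.comp
        (((hph 0 s1.1 m).add (hph 1 s1.2.1 m)).add (hph 2 s1.2.2 m)))
      (fun r => aux_measurable_eexp.comp (hph 3 s2 r))
      (fun ω => norm_one.le)
      (fun m ω => (aux_norm_eexp _).le)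
      (fun r ω => (aux_norm_eexp _).le)
      hz hind
    rw [← hk]
    refine integral_congr_ae (Filter.Eventually.of_forall fun ω => ?_)
    simp only [empCF, Complex.ofReal_add, add_mul, Complex.exp_add, one_mul]
  -- PART 3
  · have hWm : Measurable fun ω =>
        empCF n (fun k ω => (⟪t1, Y k ω 0⟫ : ℝ) + (⟪t2, Y k ω 1⟫ : ℝ)) ω -
        empCF n (fun k ω => (⟪t1, Y k ω 0⟫ : ℝ)) ω *
          empCF n (fun k ω => (⟪t2, Y k ω 1⟫ : ℝ)) ω :=
      (aux_measurable_empCF _ fun k => (hph 0 t1 k).add (hph 1 t2 k)).sub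
        ((aux_measurable_empCF _ fun k => hph 0 t1 k).mul
          (aux_measurable_empCF _ fun k => hph 1 t2 k))
    have hWb : ∀ ω, ‖empCF n (fun k ω => (⟪t1, Y k ω 0⟫ : ℝ) + (⟪t2, Y k ω 1⟫ : ℝ)) ω -
        empCF n (fun k ω => (⟪t1, Y k ω 0⟫ : ℝ)) ω *
          empCF n (fun k ω => (⟪t2, Y k ω 1⟫ : ℝ)) ω‖ ≤ 2 := by
      intro ω
      refine (norm_sub_le _ _).trans ?_
      have h1 := aux_norm_empCF_le hn
        (fun k ω => (⟪t1, Y k ω 0⟫ : ℝ) + (⟪t2, Y k ω 1⟫ : ℝ)) ω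
      have h2 := aux_norm_empCF_le hn (fun k ω => (⟪t1, Y k ω 0⟫ : ℝ)) ω
      have h3 := aux_norm_empCF_le hn (fun k ω => (⟪t2, Y k ω 1⟫ : ℝ)) ω
      have h4 : ‖empCF n (fun k ω => (⟪t1, Y k ω 0⟫ : ℝ)) ω *
          empCF n (fun k ω => (⟪t2, Y k ω 1⟫ : ℝ)) ω‖ ≤ 1 := by
        rw [norm_mul]
        exact mul_le_one₀ h2 (norm_nonneg _) h3
      linarith
    have hind : ∀ m r : Fin n, IndepFun
        (fun ω => (empCF n (fun k ω => (⟪t1, Y k ω 0⟫ : ℝ) + (⟪t2, Y k ω 1⟫ : ℝ)) ω -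
          empCF n (fun k ω => (⟪t1, Y k ω 0⟫ : ℝ)) ω *
            empCF n (fun k ω => (⟪t2, Y k ω 1⟫ : ℝ)) ω) *
          (starRingEnd ℂ) (Complex.exp (((⟪s1.1, Y m ω 0⟫ + ⟪s1.2.1, Y m ω 1⟫ +
            ⟪s1.2.2, Y m ω 2⟫ : ℝ) : ℂ) * Complex.I)))
        (fun ω => (starRingEnd ℂ)
          (Complex.exp (((⟪s2, Y r ω 3⟫ : ℝ) : ℂ) * Complex.I))) μ := by
      intro m r
      have hqS : ∀ (k : Fin n) (i : Fin 4), i ∈ ({0, 1, 2} : Finset (Fin 4)) →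
          ((k, i) : Fin n × Fin 4) ∈
            (Finset.univ : Finset (Fin n)) ×ˢ ({0, 1, 2} : Finset (Fin 4)) :=
        fun k i hi => Finset.mem_product.2 ⟨Finset.mem_univ k, hi⟩
      have hq0 : ∀ k : Fin n, ((k, (0 : Fin 4)) : Fin n × Fin 4) ∈
          (Finset.univ : Finset (Fin n)) ×ˢ ({0, 1, 2} : Finset (Fin 4)) :=
        fun k => hqS k 0 (by decide)
      have hq1 : ∀ k : Fin n, ((k, (1 : Fin 4)) : Fin n × Fin 4) ∈
          (Finset.univ : Finset (Fin n)) ×ˢ ({0, 1, 2} : Finset (Fin 4)) :=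
        fun k => hqS k 1 (by decide)
      have hq2 : ∀ k : Fin n, ((k, (2 : Fin 4)) : Fin n × Fin 4) ∈
          (Finset.univ : Finset (Fin n)) ×ˢ ({0, 1, 2} : Finset (Fin 4)) :=
        fun k => hqS k 2 (by decide)
      have hr3 : ((r, (3 : Fin 4)) : Fin n × Fin 4) ∈
          ({(r, 3)} : Finset (Fin n × Fin 4)) := by simp
      have hdisj : Disjoint ((Finset.univ : Finset (Fin n)) ×ˢ ({0, 1, 2} : Finset (Fin 4)))
          ({(r, 3)} : Finset (Fin n × Fin 4)) := by
        rw [Finset.disjoint_singleton_right, Finset.mem_product]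
        simp
      have hphi : Measurable fun w : ∀ q : ((Finset.univ : Finset (Fin n)) ×ˢ
            ({0, 1, 2} : Finset (Fin 4)) : Finset (Fin n × Fin 4)),
            EuclideanSpace ℝ (Fin (p (q : Fin n × Fin 4).2)) =>
          ((n : ℂ)⁻¹ * ∑ k, Complex.exp (((⟪t1, w ⟨(k, 0), hq0 k⟩⟫ +
              ⟪t2, w ⟨(k, 1), hq1 k⟩⟫ : ℝ) : ℂ) * Complex.I) -
            ((n : ℂ)⁻¹ * ∑ k, Complex.exp (((⟪t1, w ⟨(k, 0), hq0 k⟩⟫ : ℝ) : ℂ) *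
              Complex.I)) *
            ((n : ℂ)⁻¹ * ∑ k, Complex.exp (((⟪t2, w ⟨(k, 1), hq1 k⟩⟫ : ℝ) : ℂ) *
              Complex.I))) *
          (starRingEnd ℂ) (Complex.exp (((⟪s1.1, w ⟨(m, 0), hq0 m⟩⟫ +
            ⟪s1.2.1, w ⟨(m, 1), hq1 m⟩⟫ + ⟪s1.2.2, w ⟨(m, 2), hq2 m⟩⟫ : ℝ) : ℂ) *
            Complex.I)) := by
        refine Measurable.mul (Measurable.sub ?_ (Measurable.mul ?_ ?_)) ?_
        · exact measurable_const.mul (Finset.measurable_sum _ fun k _ =>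
            aux_measurable_eexp.comp ((measurable_const.inner (hev _ _ (hq0 k))).add
              (measurable_const.inner (hev _ _ (hq1 k)))))
        · exact measurable_const.mul (Finset.measurable_sum _ fun k _ =>
            aux_measurable_eexp.comp (measurable_const.inner (hev _ _ (hq0 k))))
        · exact measurable_const.mul (Finset.measurable_sum _ fun k _ =>
            aux_measurable_eexp.comp (measurable_const.inner (hev _ _ (hq1 k))))
        · exact hcm.comp (aux_measurable_eexp.comp
            (((measurable_const.inner (hev _ _ (hq0 m))).add
              (measurable_const.inner (hev _ _ (hq1 m)))).add
              (measurable_const.inner (hev _ _ (hq2 m)))))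
      have hpsi : Measurable fun w : ∀ q : ({(r, 3)} : Finset (Fin n × Fin 4)),
            EuclideanSpace ℝ (Fin (p (q : Fin n × Fin 4).2)) =>
          (starRingEnd ℂ) (Complex.exp (((⟪s2, w ⟨(r, 3), hr3⟩⟫ : ℝ) : ℂ) * Complex.I)) :=
        hcm.comp (aux_measurable_eexp.comp (measurable_const.inner (hev _ _ hr3)))
      have h := (hZ.indepFun_finset _ _ hdisj hZm).comp hphi hpsi
      exact h
    have hz : ∀ r : Fin n, ∫ ω, (starRingEnd ℂ)
        (Complex.exp (((⟪s2, Y r ω 3⟫ : ℝ) : ℂ) * Complex.I)) ∂μ =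
        ∫ ω, (starRingEnd ℂ) (Complex.exp (((⟪s2, X 3 ω⟫ : ℝ) : ℂ) * Complex.I)) ∂μ := by
      intro r
      exact ((hYid r).comp (hcm.comp (aux_measurable_eexp.comp
        (measurable_const.inner (measurable_pi_apply 3))))).integral_eq
    have hk := aux_key (μ := μ) hn
      (fun ω => empCF n (fun k ω => (⟪t1, Y k ω 0⟫ : ℝ) + (⟪t2, Y k ω 1⟫ : ℝ)) ω -
        empCF n (fun k ω => (⟪t1, Y k ω 0⟫ : ℝ)) ω *
          empCF n (fun k ω => (⟪t2, Y k ω 1⟫ : ℝ)) ω)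
      (fun m ω => (starRingEnd ℂ) (Complex.exp (((⟪s1.1, Y m ω 0⟫ + ⟪s1.2.1, Y m ω 1⟫ +
        ⟪s1.2.2, Y m ω 2⟫ : ℝ) : ℂ) * Complex.I)))
      (fun r ω => (starRingEnd ℂ) (Complex.exp (((⟪s2, Y r ω 3⟫ : ℝ) : ℂ) * Complex.I)))
      (∫ ω, (starRingEnd ℂ) (Complex.exp (((⟪s2, X 3 ω⟫ : ℝ) : ℂ) * Complex.I)) ∂μ)
      hWm
      (fun m => hcm.comp (aux_measurable_eexp.comp
        (((hph 0 s1.1 m).add (hph 1 s1.2.1 m)).add (hph 2 s1.2.2 m))))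
      (fun r => hcm.comp (aux_measurable_eexp.comp (hph 3 s2 r)))
      hWb
      (fun m ω => by rw [RCLike.norm_conj]; exact (aux_norm_eexp _).le)
      (fun r ω => by rw [RCLike.norm_conj]; exact (aux_norm_eexp _).le)
      hz hind
    rw [← hk]
    refine integral_congr_ae (Filter.Eventually.of_forall fun ω => ?_)
    congr 1
    simp only [empCF, map_sub, map_mul, map_inv₀, map_natCast, map_sum,
      Complex.ofReal_add, add_mul, Complex.exp_add]

end
end
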